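/- Let (X, τ₁, τ₂) be a saturated 2-topological space (so τ₁ ⊇ τ₂). Then for every subset A ⊆ X: f₁(f₁ A) ⊆ f₁(k₂(f₁ A)); f₁(k₂(f₁ A)) ⊆ f₁(f₂ A); f₁(k₂(i₂(k₂ A))) ⊆ f₁(k₂ A); and f₁(i₂(k₂(i₂ A))) ⊆ f₁(i₂ A). -/
import Mathlib


open Set

noncomputable section

/-- The closure operator of the topology `t`, as an element of the monoid
`Function.End (Set X)` of self-maps of the power set of `X` under composition. -/
def clOp {X : Type*} (t : TopologicalSpace X) : Function.End (Set X) := fun A => @closure X t A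

/-- The interior operator of the topology `t`. -/
def intOp {X : Type*} (t : TopologicalSpace X) : Function.End (Set X) := fun A => @interior X t A

/-- The frontier (topological boundary) operator of the topology `t`. -/
def frOp {X : Type*} (t : TopologicalSpace X) : Function.End (Set X) := fun A => @frontier X t A

/-- The set-complement operator. -/
def complOp {X : Type*} : Function.End (Set X) := fun A => Aᶜ

/-- An `n`-topological space: the topologies `τ 0 ⊇ τ 1 ⊇ ⋯ ⊇ τ (n-1)` are linearly
ordered by inclusion, with `τ 0` the finest: every `τ j`-open set is `τ i`-open
whenever `i ≤ j`. -/
def OrderedTop {X : Type*} {n : ℕ} (τ : Fin n → TopologicalSpace X) : Prop :=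
  ∀ i j : Fin n, i ≤ j → ∀ U : Set X, (τ j).IsOpen U → (τ i).IsOpen U

/-- Saturation: every nonempty `τ x`-open set has nonempty `τ y`-interior. -/
def SaturatedTop {X : Type*} {n : ℕ} (τ : Fin n → TopologicalSpace X) : Prop :=
  ∀ x y : Fin n, ∀ U : Set X, (τ x).IsOpen U → U.Nonempty → (@interior X (τ y) U).Nonempty

/-- `KFₙ⁰`: the submonoid of `Function.End (Set X)` generated by the closure,
interior and frontier operators of the topologies `τ j`. -/
def KF0 {X : Type*} {n : ℕ} (τ : Fin n → TopologicalSpace X) : Submonoid (Function.End (Set X)) :=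
  Submonoid.closure (⋃ j : Fin n, {clOp (τ j), intOp (τ j), frOp (τ j)})

/-- `KFₙ`: the submonoid of `Function.End (Set X)` generated by the closure and
frontier operators of the topologies `τ j` together with the complement operator. -/
def KF {X : Type*} {n : ℕ} (τ : Fin n → TopologicalSpace X) : Submonoid (Function.End (Set X)) :=
  Submonoid.closure ((⋃ j : Fin n, {clOp (τ j), frOp (τ j)}) ∪ {complOp})

/-- `p(n) = (5/24)n⁴ + (37/12)n³ + (79/24)n² + (101/12)n + 2`. -/
def pQ (n : ℕ) : ℚ :=
  5/24*(n:ℚ)^4 + 37/12*(n:ℚ)^3 + 79/24*(n:ℚ)^2 + 101/12*(n:ℚ) + 2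

/-- A saturated pair of topologies: every nonempty set open in either topology has
nonempty interior with respect to both. -/
def Saturated2 {X : Type*} (t1 t2 : TopologicalSpace X) : Prop :=
  ∀ U : Set X, (t1.IsOpen U ∨ t2.IsOpen U) → U.Nonempty →
    (@interior X t1 U).Nonempty ∧ (@interior X t2 U).Nonempty

/-- `KF₂⁰`: the submonoid generated by `{k₁, i₁, f₁, k₂, i₂, f₂}`. -/
def KF20 {X : Type*} (t1 t2 : TopologicalSpace X) : Submonoid (Function.End (Set X)) :=
  Submonoid.closure {clOp t1, intOp t1, frOp t1, clOp t2, intOp t2, frOp t2}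

/-- `KF₂`: the submonoid generated by `{k₁, f₁, k₂, f₂, c}`. -/
def KF2 {X : Type*} (t1 t2 : TopologicalSpace X) : Submonoid (Function.End (Set X)) :=
  Submonoid.closure {clOp t1, frOp t1, clOp t2, frOp t2, complOp}

section Helpers
variable {X : Type*}


lemma my_mem_closure (t : TopologicalSpace X) {s : Set X} {x : X} :
    x ∈ @closure X t s ↔ ∀ o, t.IsOpen o → x ∈ o → (o ∩ s).Nonempty := by
  letI := t; exact mem_closure_iff
lemma my_isOpen_interior (t : TopologicalSpace X) (s : Set X) :
    t.IsOpen (@interior X t s) := by letI := t; exact isOpen_interior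
lemma my_interior_subset (t : TopologicalSpace X) {s : Set X} :
    @interior X t s ⊆ s := by letI := t; exact interior_subset
lemma my_interior_maximal (t : TopologicalSpace X) {s u : Set X}
    (h1 : u ⊆ s) (h2 : t.IsOpen u) : u ⊆ @interior X t s := by
  letI := t; exact interior_maximal h1 h2
lemma my_subset_closure (t : TopologicalSpace X) {s : Set X} :
    s ⊆ @closure X t s := by letI := t; exact subset_closure
lemma my_closure_minimal (t : TopologicalSpace X) {s u : Set X}
    (h1 : s ⊆ u) (h2 : @IsClosed X t u) : @closure X t s ⊆ u := by
  letI := t; exact closure_minimal h1 h2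
lemma my_isClosed_closure (t : TopologicalSpace X) (s : Set X) :
    @IsClosed X t (@closure X t s) := by letI := t; exact isClosed_closure
lemma my_closure_eq (t : TopologicalSpace X) {s : Set X} (h : @IsClosed X t s) :
    @closure X t s = s := by letI := t; exact h.closure_eq
lemma my_interior_eq (t : TopologicalSpace X) {s : Set X} (h : t.IsOpen s) :
    @interior X t s = s := by letI := t; exact IsOpen.interior_eq h

lemma my_isClosed_frontier (t : TopologicalSpace X) (s : Set X) :
    @IsClosed X t (@frontier X t s) := by letI := t; exact isClosed_frontier
lemma my_isOpen_inter (t : TopologicalSpace X) {s u : Set X}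
    (h1 : t.IsOpen s) (h2 : t.IsOpen u) : t.IsOpen (s ∩ u) := by
  letI := t; exact IsOpen.inter h1 h2
lemma my_mem_frontier (t : TopologicalSpace X) {s : Set X} {x : X} :
    x ∈ @frontier X t s ↔ x ∈ @closure X t s ∧ x ∉ @interior X t s := Iff.rfl

variable {t1 t2 : TopologicalSpace X}

lemma aux_closed21 (hord : ∀ U : Set X, t2.IsOpen U → t1.IsOpen U)
    {s : Set X} (h : @IsClosed X t2 s) : @IsClosed X t1 s := by
  letI := t1; exact ⟨hord _ h.isOpen_compl⟩

lemma aux_sat2 (hsat : Saturated2 t1 t2) {U : Set X}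
    (hU : t1.IsOpen U) (hne : U.Nonempty) :
    ∃ V : Set X, t2.IsOpen V ∧ V ⊆ U ∧ V.Nonempty :=
  ⟨@interior X t2 U, my_isOpen_interior t2 U, my_interior_subset t2,
    (hsat U (Or.inl hU) hne).2⟩

/-- L1: `i₁ k₂ C ⊆ k₁ C`. -/
lemma aux_i1k2 (hsat : Saturated2 t1 t2) (C : Set X) :
    @interior X t1 (@closure X t2 C) ⊆ @closure X t1 C := by
  intro u hu
  rw [my_mem_closure t1]
  intro V hV hxV
  obtain ⟨W, hWo, hWsub, w, hw⟩ :=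
    aux_sat2 hsat (my_isOpen_inter t1 hV (my_isOpen_interior t1 _)) ⟨u, hxV, hu⟩
  have hwk2 : w ∈ @closure X t2 C := my_interior_subset t1 (hWsub hw).2
  obtain ⟨c, hc⟩ := (my_mem_closure t2).1 hwk2 W hWo hw
  exact ⟨c, (hWsub hc.1).1, hc.2⟩

/-- L2: `i₁ k₂ A ⊆ k₂ i₂ k₂ A`. -/
lemma aux_L2 (hord : ∀ U : Set X, t2.IsOpen U → t1.IsOpen U)
    (hsat : Saturated2 t1 t2) (A : Set X) :
    @interior X t1 (@closure X t2 A) ⊆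
      @closure X t2 (@interior X t2 (@closure X t2 A)) := by
  intro u hu
  rw [my_mem_closure t2]
  intro W hWo hxW
  obtain ⟨V, hVo, hVsub, v, hv⟩ :=
    aux_sat2 hsat (my_isOpen_inter t1 (hord W hWo) (my_isOpen_interior t1 _)) ⟨u, hxW, hu⟩
  exact ⟨v, (hVsub hv).1,
    my_interior_maximal t2 (fun y hy => my_interior_subset t1 (hVsub hy).2) hVo hv⟩

/-- L3: `i₁ f₂ A ⊆ k₂ f₁ A`. -/
lemma aux_L3 (hord : ∀ U : Set X, t2.IsOpen U → t1.IsOpen U)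
    (hsat : Saturated2 t1 t2) (A : Set X) :
    @interior X t1 (@frontier X t2 A) ⊆ @closure X t2 (@frontier X t1 A) := by
  intro u hu
  rw [my_mem_closure t2]
  intro W hWo hxW
  obtain ⟨V, hVo, hVsub, v, hv⟩ :=
    aux_sat2 hsat (my_isOpen_inter t1 (hord W hWo) (my_isOpen_interior t1 _)) ⟨u, hxW, hu⟩
  have hVf2 : V ⊆ @frontier X t2 A := fun y hy => my_interior_subset t1 (hVsub hy).2
  obtain ⟨a, haV, haA⟩ : (V ∩ A).Nonempty :=
    (my_mem_closure t2).1 ((my_mem_frontier t2).1 (hVf2 hv)).1 V hVo hv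
  refine ⟨a, (hVsub haV).1, (my_mem_frontier t1).2 ⟨my_subset_closure t1 haA, ?_⟩⟩
  intro hai
  obtain ⟨V', hV'o, hV'sub, w', hw'⟩ :=
    aux_sat2 hsat (my_isOpen_inter t1 (hord V hVo) (my_isOpen_interior t1 A)) ⟨a, haV, hai⟩
  have : w' ∈ @interior X t2 A :=
    my_interior_maximal t2 (fun y hy => my_interior_subset t1 (hV'sub hy).2) hV'o hw'
  exact ((my_mem_frontier t2).1 (hVf2 (hV'sub hw').1)).2 this

end Helpers

/-- in a saturated 2-topological space (τ₁ ⊇ τ₂), for every `A ⊆ X`: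
`f₁(f₁ A) ⊆ f₁(k₂(f₁ A))`, `f₁(k₂(f₁ A)) ⊆ f₁(f₂ A)`,
`f₁(k₂(i₂(k₂ A))) ⊆ f₁(k₂ A)`, and `f₁(i₂(k₂(i₂ A))) ⊆ f₁(i₂ A)`. -/
theorem stmt_17 {X : Type*} (t1 t2 : TopologicalSpace X)
    (hord : ∀ U : Set X, t2.IsOpen U → t1.IsOpen U) (hsat : Saturated2 t1 t2)
    (A : Set X) :
    @frontier X t1 (@frontier X t1 A) ⊆ @frontier X t1 (@closure X t2 (@frontier X t1 A)) ∧
      @frontier X t1 (@closure X t2 (@frontier X t1 A)) ⊆ @frontier X t1 (@frontier X t2 A) ∧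
      @frontier X t1 (@closure X t2 (@interior X t2 (@closure X t2 A))) ⊆
        @frontier X t1 (@closure X t2 A) ∧
      @frontier X t1 (@interior X t2 (@closure X t2 (@interior X t2 A))) ⊆
        @frontier X t1 (@interior X t2 A) := by

  have hcl21 : ∀ {s : Set X}, @IsClosed X t2 s → @IsClosed X t1 s := fun h => aux_closed21 hord h
  have hkmono : ∀ s : Set X, @closure X t1 s ⊆ @closure X t2 s := fun s =>
    my_closure_minimal t1 (my_subset_closure t2) (hcl21 (my_isClosed_closure t2 s))
  have himono : ∀ s : Set X, @interior X t2 s ⊆ @interior X t1 s := fun s =>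
    my_interior_maximal t1 (my_interior_subset t2) (hord _ (my_isOpen_interior t2 s))
  refine ⟨?_, ?_, ?_, ?_⟩
  · -- f₁(f₁ A) ⊆ f₁(k₂(f₁ A))
    intro x hx
    obtain ⟨hx1, hx2⟩ := (my_mem_frontier t1).1 hx
    have hBc : @closure X t1 (@frontier X t1 A) = @frontier X t1 A :=
      my_closure_eq t1 (my_isClosed_frontier t1 A)
    have hxB : x ∈ @frontier X t1 A := hBc ▸ hx1
    refine (my_mem_frontier t1).2
      ⟨my_subset_closure t1 (my_subset_closure t2 hxB), fun hxi => hx2 ?_⟩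
    exact my_interior_maximal t1
      (fun y hy => hBc ▸ aux_i1k2 hsat (@frontier X t1 A) hy)
      (my_isOpen_interior t1 _) hxi
  · -- f₁(k₂(f₁ A)) ⊆ f₁(f₂ A)
    intro x hx
    obtain ⟨hx1, hx2⟩ := (my_mem_frontier t1).1 hx
    have h12 : @frontier X t1 A ⊆ @frontier X t2 A := fun y hy =>
      (my_mem_frontier t2).2 ⟨hkmono A ((my_mem_frontier t1).1 hy).1,
        fun h => ((my_mem_frontier t1).1 hy).2 (himono A h)⟩
    have hsub : @closure X t2 (@frontier X t1 A) ⊆ @frontier X t2 A :=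
      my_closure_minimal t2 h12 (my_isClosed_frontier t2 A)
    have hCc : @closure X t1 (@closure X t2 (@frontier X t1 A)) =
        @closure X t2 (@frontier X t1 A) :=
      my_closure_eq t1 (hcl21 (my_isClosed_closure t2 _))
    have hxC : x ∈ @closure X t2 (@frontier X t1 A) := hCc ▸ hx1
    refine (my_mem_frontier t1).2
      ⟨my_subset_closure t1 (hsub hxC), fun hxi => hx2 ?_⟩
    exact my_interior_maximal t1 (fun y hy => aux_L3 hord hsat A hy)
      (my_isOpen_interior t1 _) hxi
  · -- f₁(k₂(i₂(k₂ A))) ⊆ f₁(k₂ A)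
    intro x hx
    obtain ⟨hx1, hx2⟩ := (my_mem_frontier t1).1 hx
    have hCc : @closure X t1 (@closure X t2 (@interior X t2 (@closure X t2 A))) =
        @closure X t2 (@interior X t2 (@closure X t2 A)) :=
      my_closure_eq t1 (hcl21 (my_isClosed_closure t2 _))
    have hxC : x ∈ @closure X t2 (@interior X t2 (@closure X t2 A)) := hCc ▸ hx1
    have hCsub : @closure X t2 (@interior X t2 (@closure X t2 A)) ⊆ @closure X t2 A :=
      my_closure_minimal t2 (my_interior_subset t2) (my_isClosed_closure t2 A)
    refine (my_mem_frontier t1).2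
      ⟨my_subset_closure t1 (hCsub hxC), fun hxi => hx2 ?_⟩
    exact my_interior_maximal t1 (aux_L2 hord hsat A) (my_isOpen_interior t1 _) hxi
  · -- f₁(i₂(k₂(i₂ A))) ⊆ f₁(i₂ A)
    intro x hx
    obtain ⟨hx1, hx2⟩ := (my_mem_frontier t1).1 hx
    have hCo : t1.IsOpen (@interior X t2 (@closure X t2 (@interior X t2 A))) :=
      hord _ (my_isOpen_interior t2 _)
    have hCi : @interior X t1 (@interior X t2 (@closure X t2 (@interior X t2 A))) =
        @interior X t2 (@closure X t2 (@interior X t2 A)) := my_interior_eq t1 hCo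
    have hCk : @interior X t2 (@closure X t2 (@interior X t2 A)) ⊆
        @closure X t1 (@interior X t2 A) := fun y hy =>
      aux_i1k2 hsat (@interior X t2 A)
        (my_interior_maximal t1 (my_interior_subset t2) hCo hy)
    have hDC : @interior X t2 A ⊆ @interior X t2 (@closure X t2 (@interior X t2 A)) :=
      my_interior_maximal t2 (my_subset_closure t2) (my_isOpen_interior t2 A)
    refine (my_mem_frontier t1).2
      ⟨my_closure_minimal t1 hCk (my_isClosed_closure t1 _) hx1, fun hxi => hx2 ?_⟩
    have hxc : x ∈ @interior X t2 (@closure X t2 (@interior X t2 A)) :=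
      hDC (my_interior_subset t1 hxi)
    rwa [← hCi] at hxc
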